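/- Let k be a field of characteristic ≠ 2, let p ≥ 1, let a, b ∈ ℕ with a + b = 2p and (-1)^a = (-1)^b, and set ε = -(-1)^a. Define n_e, x_e as the coefficients of (1-T)^a(1+T)^b and its inverse normalization (x_0 = 1, ∑_{j≤e} n_j x_{e-j} = 0 for e ≥ 1). Let V be a 2p-dimensional k-vector space with a nondegenerate ε-symmetric bilinear form (,), and let g be an isometry such that (g-1)^a(g+1)^b = 0 on V, with g acting as a single Jordan block of size a on the generalized 1-eigenspace and -g as a single Jordan block of size b on the generalized (-1)-eigenspace. Suppose w ∈ V satisfies (g^i w, g^j w) = 0 whenever |i-j| < p and (g^i w, g^j w) = 1 whenever j - i = p. Then for all integers i, j: (g^i w, g^j w) = 0 if |i-j| < p, = x_s if j-i = p+s with s ≥ 0, and = ε x_s if i-j = p+s with s ≥ 0. -/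

import Mathlib

theorem stmt18 (k : Type*) [Field k] (h2 : (2 : k) ≠ 0)
    (V : Type*) [AddCommGroup V] [Module k V] [FiniteDimensional k V]
    (p a b : ℕ) (hp : 1 ≤ p) (hab : a + b = 2 * p)
    (hpar : (-1 : ℤ) ^ a = (-1 : ℤ) ^ b)
    (ε : ℤ) (hε : ε = -(-1 : ℤ) ^ a)
    (n : ℕ → ℤ)
    (hn : ∀ e, n e =
      ((1 - Polynomial.X) ^ a * (1 + Polynomial.X) ^ b : Polynomial ℤ).coeff e)
    (x : ℕ → ℤ) (hx0 : x 0 = 1)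
    (hx : ∀ e, 1 ≤ e → ∑ j ∈ Finset.range (e + 1), n j * x (e - j) = 0)
    (hdim : Module.finrank k V = 2 * p)
    (B : V →ₗ[k] V →ₗ[k] k)
    (hsym : ∀ v w : V, B v w = (ε : k) * B w v)
    (hnd : ∀ v : V, (∀ w : V, B v w = 0) → v = 0)
    (g : V ≃ₗ[k] V)
    (hiso : ∀ v w : V, B (g v) (g w) = B v w)
    (hmin : (g.toLinearMap - 1) ^ a * (g.toLinearMap + 1) ^ b = 0)
    (hJa : Module.finrank k (LinearMap.ker ((g.toLinearMap - 1) ^ (2 * p))) = a)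
    (hJa1 : Module.finrank k (LinearMap.ker (g.toLinearMap - 1)) ≤ 1)
    (hJb : Module.finrank k (LinearMap.ker ((g.toLinearMap + 1) ^ (2 * p))) = b)
    (hJb1 : Module.finrank k (LinearMap.ker (g.toLinearMap + 1)) ≤ 1)
    (w : V)
    (hw1 : ∀ i j : ℤ, |i - j| < (p : ℤ) → B ((g ^ i) w) ((g ^ j) w) = 0)
    (hw2 : ∀ i j : ℤ, j - i = (p : ℤ) → B ((g ^ i) w) ((g ^ j) w) = 1)
    (i j : ℤ) :
    B ((g ^ i) w) ((g ^ j) w) =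
      if |i - j| < (p : ℤ) then 0
      else if (p : ℤ) ≤ j - i then ((x (j - i - p).toNat : ℤ) : k)
      else (ε : k) * ((x (i - j - p).toNat : ℤ) : k) := by
  classical
  -- coercion of powers
  have hcoe : ∀ (e : ℕ) (v : V), (g.toLinearMap ^ e) v = (g ^ (e : ℤ)) v := by
    intro e
    rw [zpow_natCast]
    induction e with
    | zero => intro v; simp
    | succ m ih =>
      intro v
      rw [pow_succ, pow_succ]
      show (_ : V →ₗ[k] V) ((g : V →ₗ[k] V) v) = _
      exact ih (g v)
  -- invariance under integer powers of g
  have hinv : ∀ (m : ℤ) (u v : V), B ((g ^ m) u) ((g ^ m) v) = B u v := by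
    intro m
    induction m using Int.induction_on with
    | zero => intro u v; simp
    | succ m ih =>
      intro u v
      have h1 : (g ^ ((m : ℤ) + 1)) u = (g ^ (m : ℤ)) (g u) := by
        rw [zpow_add_one]; rfl
      have h2 : (g ^ ((m : ℤ) + 1)) v = (g ^ (m : ℤ)) (g v) := by
        rw [zpow_add_one]; rfl
      rw [h1, h2, ih (g u) (g v), hiso]
    | pred m ih =>
      intro u v
      have h1 : ∀ z : V, (g ^ (-(m : ℤ) - 1)) z = (g ^ (-(m:ℤ))) (g.symm z) := by
        intro z
        have e1 : (g ^ (-(m:ℤ) - 1)) = g ^ (-(m:ℤ)) * g ^ (-1 : ℤ) := by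
          rw [sub_eq_add_neg, zpow_add]
        have e2 : (g ^ (-1 : ℤ)) z = g.symm z := by
          rw [zpow_neg_one]; rfl
        rw [e1]
        show (g ^ (-(m:ℤ))) ((g ^ (-1 : ℤ)) z) = _
        rw [e2]
      rw [h1 u, h1 v, ih (g.symm u) (g.symm v)]
      have := hiso (g.symm u) (g.symm v)
      simp only [LinearEquiv.apply_symm_apply] at this
      rw [← this]
  -- shift
  have hshift : ∀ i j : ℤ, B ((g ^ i) w) ((g ^ j) w) = B w ((g ^ (j - i)) w) := by
    intro i j
    have := hinv i w ((g ^ (j - i)) w)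
    rw [← this]
    congr 1
    have : (g ^ i) ((g ^ (j - i)) w) = ((g ^ i) * (g ^ (j - i))) w := rfl
    rw [this, ← zpow_add]
    congr 1
    ring
  set f : ℤ → k := fun d => B w ((g ^ d) w) with hf
  have hf0 : ∀ d : ℤ, |d| < (p : ℤ) → f d = 0 := by
    intro d hd
    have := hw1 0 d (by simpa using hd)
    simpa [hf] using this
  have hfp : f (p : ℤ) = 1 := by
    have := hw2 0 (p : ℤ) (by ring)
    simpa [hf] using this
  have hfs : ∀ d : ℤ, f d = (ε : k) * f (-d) := by
    intro d
    have h1 := hshift (-d) 0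
    simp only [sub_neg_eq_add, zero_add] at h1
    have h0 : (g ^ (0:ℤ)) w = w := by simp
    rw [h0] at h1
    calc f d = B ((g ^ (-d)) w) w := h1.symm
      _ = (ε : k) * B w ((g ^ (-d)) w) := hsym _ _
      _ = (ε : k) * f (-d) := rfl
  -- the operator identity
  have hP0 : (Polynomial.aeval g.toLinearMap
      (((1 - Polynomial.X) ^ a * (1 + Polynomial.X) ^ b : Polynomial ℤ))) = 0 := by
    rw [map_mul, map_pow, map_pow, map_sub, map_add, map_one, Polynomial.aeval_X]
    have h1 : (1 - g.toLinearMap) ^ a = (-1 : Module.End k V) ^ a * (g.toLinearMap - 1) ^ a := by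
      rw [← neg_pow, neg_sub]
    rw [h1, mul_assoc, show (1 + g.toLinearMap) = (g.toLinearMap + 1) from add_comm _ _,
      hmin, mul_zero]
  have hdeg : ((1 - Polynomial.X) ^ a * (1 + Polynomial.X) ^ b : Polynomial ℤ).natDegree
      < 2 * p + 1 := by
    have h1 : ((1 - Polynomial.X : Polynomial ℤ)).natDegree ≤ 1 := by
      apply le_trans (Polynomial.natDegree_sub_le _ _)
      simp
    have h2 : ((1 + Polynomial.X : Polynomial ℤ)).natDegree ≤ 1 := by
      apply le_trans (Polynomial.natDegree_add_le _ _)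
      simp
    calc ((1 - Polynomial.X) ^ a * (1 + Polynomial.X) ^ b : Polynomial ℤ).natDegree
        ≤ ((1 - Polynomial.X : Polynomial ℤ) ^ a).natDegree
          + ((1 + Polynomial.X : Polynomial ℤ) ^ b).natDegree := Polynomial.natDegree_mul_le
      _ ≤ a * 1 + b * 1 := by
          apply Nat.add_le_add
          · exact le_trans Polynomial.natDegree_pow_le (Nat.mul_le_mul_left a h1)
          · exact le_trans Polynomial.natDegree_pow_le (Nat.mul_le_mul_left b h2)
      _ < 2 * p + 1 := by omega
  have hsum0 : ∑ e ∈ Finset.range (2 * p + 1), n e • ((g.toLinearMap) ^ e) w = 0 := by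
    have := Polynomial.aeval_eq_sum_range' hdeg g.toLinearMap
    rw [hP0] at this
    have h2 := congrArg (fun (L : V →ₗ[k] V) => L w) this.symm
    simpa [LinearMap.sum_apply, hn] using h2
  -- n e vanishes beyond degree
  have hnz : ∀ e, 2 * p + 1 ≤ e → n e = 0 := by
    intro e he
    rw [hn]
    exact Polynomial.coeff_eq_zero_of_natDegree_lt (lt_of_lt_of_le hdeg he)
  have hn0 : n 0 = 1 := by
    rw [hn, Polynomial.coeff_zero_eq_eval_zero]
    simp
  -- the recurrence for f
  have hrec : ∀ c : ℤ, ∑ e ∈ Finset.range (2 * p + 1), ((n e : ℤ) : k) * f (c - e) = 0 := by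
    intro c
    have h1 := congrArg (fun v => B v ((g ^ c) w)) hsum0
    simp only [map_sum, LinearMap.sum_apply, map_zsmul, LinearMap.smul_apply, map_zero,
      LinearMap.zero_apply] at h1
    rw [← h1]
    apply Finset.sum_congr rfl
    intro e _
    rw [zsmul_eq_mul]
    congr 1
    rw [hcoe e w, hshift]
  -- the key induction
  have key : ∀ s : ℕ, f ((p : ℤ) + s) = ((x s : ℤ) : k) := by
    intro s
    induction s using Nat.strong_induction_on with
    | _ s ih =>
      rcases Nat.eq_zero_or_pos s with hs | hs
      · subst hs; simpa [hx0] using hfp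
      · -- s ≥ 1
        set M := 2 * p + 1 + (s + 1) with hM
        have hsub1 : Finset.range (2 * p + 1) ⊆ Finset.range M := by
          apply Finset.range_subset_range.mpr; omega
        have hsub2 : Finset.range (s + 1) ⊆ Finset.range M := by
          apply Finset.range_subset_range.mpr; omega
        have hSum1 : ∑ e ∈ Finset.range M, ((n e : ℤ) : k) * f ((p : ℤ) + s - e) = 0 := by
          rw [← hrec ((p : ℤ) + s)]
          symm
          apply Finset.sum_subset hsub1
          intro e _ he
          simp only [Finset.mem_range, not_lt] at he
          rw [hnz e he]
          simp
        have hxs := hx s hs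
        have hxs' : ∑ e ∈ Finset.range (s + 1),
            ((n e : ℤ) : k) * ((x (s - e) : ℤ) : k) = 0 := by
          have := congrArg (fun z : ℤ => (z : k)) hxs
          push_cast at this
          simpa using this
        have hSum2 : ∑ e ∈ Finset.range M,
            (if e ≤ s then ((n e : ℤ) : k) * ((x (s - e) : ℤ) : k) else 0) = 0 := by
          rw [← Finset.sum_subset hsub2]
          · rw [← hxs']
            apply Finset.sum_congr rfl
            intro e he
            rw [if_pos (by simp only [Finset.mem_range] at he; omega)]
          · intro e _ he
            simp only [Finset.mem_range, not_lt] at he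
            rw [if_neg (by omega)]
        -- termwise comparison
        have hterm : ∀ e ∈ Finset.range M,
            ((n e : ℤ) : k) * f ((p : ℤ) + s - e)
            = (if e ≤ s then ((n e : ℤ) : k) * ((x (s - e) : ℤ) : k) else 0)
              + (if e = 0 then f ((p : ℤ) + s) - ((x s : ℤ) : k) else 0) := by
          intro e he
          rcases Nat.eq_zero_or_pos e with he0 | he0
          · subst he0
            rw [if_pos (Nat.zero_le s), if_pos rfl, hn0]
            simp only [Nat.cast_zero, sub_zero, Nat.sub_zero, Int.cast_one, one_mul]
            ring
          · rw [if_neg (show ¬ e = 0 by omega)]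
            by_cases hes : e ≤ s
            · rw [if_pos hes, add_zero]
              congr 1
              have hc : (p : ℤ) + s - e = (p : ℤ) + ((s - e : ℕ) : ℤ) := by
                omega
              rw [hc, ih (s - e) (by omega)]
            · rw [if_neg hes, zero_add]
              by_cases heN : 2 * p + 1 ≤ e
              · rw [hnz e heN]; simp
              · have habs : |(p : ℤ) + s - e| < (p : ℤ) := by
                  rw [abs_lt]
                  omega
                rw [hf0 _ habs, mul_zero]
        have := Finset.sum_congr rfl hterm
        rw [hSum1, Finset.sum_add_distrib, hSum2, zero_add, Finset.sum_ite_eq'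
          (Finset.range M) 0 (fun _ => f ((p : ℤ) + s) - ((x s : ℤ) : k))] at this
        rw [if_pos (by simp only [Finset.mem_range]; omega)] at this
        have h4 : f ((p : ℤ) + s) - ((x s : ℤ) : k) = 0 := this.symm
        exact sub_eq_zero.mp h4
  -- conclude
  rw [hshift]
  by_cases h1 : |i - j| < (p : ℤ)
  · rw [if_pos h1]
    apply hf0
    rw [abs_sub_comm]
    exact h1
  · rw [if_neg h1]
    by_cases h2 : (p : ℤ) ≤ j - i
    · rw [if_pos h2]
      have h4 : (p : ℤ) + ((j - i - (p:ℤ)).toNat : ℤ) = j - i := by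
        rw [Int.toNat_of_nonneg (by omega)]; ring
      have hkey := key (j - i - (p:ℤ)).toNat
      rw [h4] at hkey
      exact hkey
    · rw [if_neg h2]
      have h3 : (p : ℤ) ≤ i - j := by
        rw [abs_lt] at h1
        omega
      have h5 : (p : ℤ) + ((i - j - (p:ℤ)).toNat : ℤ) = -(j - i) := by
        rw [Int.toNat_of_nonneg (by omega)]; ring
      have hkey := key (i - j - (p:ℤ)).toNat
      rw [h5] at hkey
      calc B w ((g ^ (j - i)) w) = f (j - i) := rfl
        _ = (ε : k) * f (-(j - i)) := hfs _
        _ = (ε : k) * ((x (i - j - (p:ℤ)).toNat : ℤ) : k) := by rw [hkey]
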